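/- arXiv:2104.06763 — 2 statements merged into one kernel-verified Lean document; each statement's English description precedes it below -/
import Mathlib

section
/- Let a, L, Δ > 0, and let φ : ℝ → ℝ be differentiable with L-Lipschitz derivative. Suppose |φ'(s)| ≤ a and |φ'(s+Δ)| ≤ a for some s ∈ ℝ. Then ∫_s^{s+Δ} |φ'(t)| dt ≤ a·Δ + L·Δ²/4. -/
/-- If `φ` has an `L`-Lipschitz derivative with `|φ'(s)| ≤ a` and `|φ'(s+Δ)| ≤ a`, then
`∫_s^{s+Δ} |φ'(t)| dt ≤ a·Δ + L·Δ²/4`. -/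
theorem stmt_10 (φ : ℝ → ℝ) (L a Δ s : ℝ)
    (hΔ : 0 < Δ) (ha : 0 ≤ a) (hL : 0 < L)
    (hdiff : Differentiable ℝ φ)
    (hlip : ∀ x y, |deriv φ x - deriv φ y| ≤ L * |x - y|)
    (h1 : |deriv φ s| ≤ a) (h2 : |deriv φ (s + Δ)| ≤ a) :
    ∫ t in s..(s + Δ), |deriv φ t| ≤ a * Δ + L * Δ ^ 2 / 4 := by
  have hc : Continuous (deriv φ) := by
    have hlw : LipschitzWith (Real.toNNReal L) (deriv φ) := by
      apply LipschitzWith.of_dist_le_mul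
      intro x y
      rw [Real.dist_eq, Real.dist_eq, Real.coe_toNNReal L hL.le]
      exact hlip x y
    exact hlw.continuous
  set g : ℝ → ℝ := fun t => a + L * min (t - s) (s + Δ - t) with hg
  have hcg : Continuous g := by
    apply continuous_const.add
    exact continuous_const.mul ((continuous_id.sub continuous_const).min
      (continuous_const.sub continuous_id))
  have hle : s ≤ s + Δ := by linarith
  have hmono : ∫ t in s..(s + Δ), |deriv φ t| ≤ ∫ t in s..(s + Δ), g t := by
    apply intervalIntegral.integral_mono_on hle
    · exact (hc.abs.intervalIntegrable _ _)
    · exact hcg.intervalIntegrable _ _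
    · intro t ht
      obtain ⟨ht1, ht2⟩ := ht
      have b1 : |deriv φ t| ≤ a + L * (t - s) := by
        have := hlip t s
        have habs : |t - s| = t - s := abs_of_nonneg (by linarith)
        calc |deriv φ t| ≤ |deriv φ s| + |deriv φ t - deriv φ s| := by
              have := abs_sub_abs_le_abs_sub (deriv φ t) (deriv φ s); linarith [abs_abs (deriv φ t)]
          _ ≤ a + L * (t - s) := by rw [habs] at this; linarith
      have b2 : |deriv φ t| ≤ a + L * (s + Δ - t) := by
        have := hlip t (s + Δ)
        have habs : |t - (s + Δ)| = s + Δ - t := by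
          rw [abs_sub_comm]; exact abs_of_nonneg (by linarith)
        calc |deriv φ t| ≤ |deriv φ (s + Δ)| + |deriv φ t - deriv φ (s + Δ)| := by
              have := abs_sub_abs_le_abs_sub (deriv φ t) (deriv φ (s + Δ)); linarith
          _ ≤ a + L * (s + Δ - t) := by rw [habs] at this; linarith
      simp only [hg]
      rcases le_total (t - s) (s + Δ - t) with h | h
      · rw [min_eq_left h]; exact b1
      · rw [min_eq_right h]; exact b2
  have hmid : s ≤ s + Δ / 2 := by linarith
  have hmid2 : s + Δ / 2 ≤ s + Δ := by linarith
  have hsplit : ∫ t in s..(s + Δ), g t =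
      (∫ t in s..(s + Δ / 2), g t) + ∫ t in (s + Δ / 2)..(s + Δ), g t := by
    rw [intervalIntegral.integral_add_adjacent_intervals] <;>
      exact hcg.intervalIntegrable _ _
  have e1 : (∫ t in s..(s + Δ / 2), g t) = a * (Δ / 2) + L * (Δ ^ 2 / 8) := by
    have : ∀ t ∈ Set.uIcc s (s + Δ / 2), g t = a + L * (t - s) := by
      intro t ht
      rw [Set.uIcc_of_le hmid] at ht
      simp only [hg]
      rw [min_eq_left (by linarith [ht.1, ht.2])]
    rw [intervalIntegral.integral_congr this]
    rw [intervalIntegral.integral_add intervalIntegrable_const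
      (by apply Continuous.intervalIntegrable; fun_prop),
      intervalIntegral.integral_const_mul]
    have : (∫ t in s..(s + Δ / 2), (t - s)) = Δ ^ 2 / 8 := by
      rw [intervalIntegral.integral_sub (by apply Continuous.intervalIntegrable; fun_prop)
        (by apply Continuous.intervalIntegrable; fun_prop), integral_id, intervalIntegral.integral_const, smul_eq_mul]
      ring
    rw [this]; simp; ring
  have e2 : (∫ t in (s + Δ / 2)..(s + Δ), g t) = a * (Δ / 2) + L * (Δ ^ 2 / 8) := by
    have : ∀ t ∈ Set.uIcc (s + Δ / 2) (s + Δ), g t = a + L * (s + Δ - t) := by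
      intro t ht
      rw [Set.uIcc_of_le hmid2] at ht
      simp only [hg]
      rw [min_eq_right (by linarith [ht.1, ht.2])]
    rw [intervalIntegral.integral_congr this]
    rw [intervalIntegral.integral_add intervalIntegrable_const
      (by apply Continuous.intervalIntegrable; fun_prop),
      intervalIntegral.integral_const_mul]
    have : (∫ t in (s + Δ / 2)..(s + Δ), (s + Δ - t)) = Δ ^ 2 / 8 := by
      rw [intervalIntegral.integral_sub (by apply Continuous.intervalIntegrable; fun_prop)
        (by apply Continuous.intervalIntegrable; fun_prop), integral_id, intervalIntegral.integral_const, smul_eq_mul]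
      ring
    rw [this]; simp; ring
  calc ∫ t in s..(s + Δ), |deriv φ t| ≤ ∫ t in s..(s + Δ), g t := hmono
    _ = a * Δ + L * Δ ^ 2 / 4 := by rw [hsplit, e1, e2]; ring
end

section
/- Let v ∈ ℝ^d be orthogonal to e_d (i.e., v_d = 0), let t ∈ [−2, 2], let s ∈ [0, 1], and let u ∈ ℝ^d with ‖u‖ ≤ 1. Then the vector g = t·e_d − (1/4)·v̄ − s(v̄ − (1/2)u) satisfies ‖g‖ ≥ 1/4, where v̄ = v/‖v‖ (v ≠ 0). -/
open scoped RealInnerProductSpace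


/-- For `v ≠ 0` with `v_d = 0`, `t ∈ [−2,2]`, `s ∈ [0,1]` and `‖u‖ ≤ 1`, the vector
`g = t·e_d − (1/4)v̄ − s(v̄ − u/2)` has norm at least `1/4`. -/
theorem stmt_14 (n : ℕ) (v u : EuclideanSpace ℝ (Fin (n + 1)))
    (hv : v ≠ 0) (hvd : v (Fin.last n) = 0)
    (t s : ℝ) (ht : t ∈ Set.Icc (-2 : ℝ) 2) (hs : s ∈ Set.Icc (0 : ℝ) 1)
    (hu : ‖u‖ ≤ 1) :
    (1 / 4 : ℝ) ≤
      ‖t • (EuclideanSpace.single (Fin.last n) (1 : ℝ)) - (1 / 4 : ℝ) • (‖v‖⁻¹ • v)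
        - s • (‖v‖⁻¹ • v - (1 / 2 : ℝ) • u)‖ := by
  set w : EuclideanSpace ℝ (Fin (n + 1)) := ‖v‖⁻¹ • v with hw
  have hvnorm : ‖v‖ ≠ 0 := norm_ne_zero_iff.mpr hv
  have hwnorm : ‖w‖ = 1 := by
    rw [hw, norm_smul, norm_inv, norm_norm, inv_mul_cancel₀ hvnorm]
  set g := t • (EuclideanSpace.single (Fin.last n) (1 : ℝ)) - (1 / 4 : ℝ) • w
      - s • (w - (1 / 2 : ℝ) • u) with hg
  have key : (1 / 4 : ℝ) ≤ ⟪g, -w⟫ := by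
    have h1 : ⟪EuclideanSpace.single (Fin.last n) (1 : ℝ), w⟫ = 0 := by
      rw [EuclideanSpace.inner_single_left]
      simp [hw, hvd]
    have h2 : ⟪w, w⟫ = 1 := by
      rw [real_inner_self_eq_norm_sq, hwnorm]; norm_num
    have h3 : ⟪u, w⟫ ≤ 1 := by
      calc ⟪u, w⟫ ≤ ‖u‖ * ‖w‖ := real_inner_le_norm u w
        _ ≤ 1 := by rw [hwnorm]; linarith
    simp only [hg, inner_neg_right, inner_sub_left, real_inner_smul_left, h1, h2]
    nlinarith [hs.1, hs.2]
  calc (1 / 4 : ℝ) ≤ ⟪g, -w⟫ := key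
    _ ≤ ‖g‖ * ‖-w‖ := real_inner_le_norm g (-w)
    _ = ‖g‖ := by rw [norm_neg, hwnorm, mul_one]
end
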